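/- Define, for θ ∈ ℝ, the homogeneous cubic vector field g_θ : ℝ² → ℝ² by g_θ(x,y) = (−sin(θ)·x³ + cos(θ)·y³, −cos(θ)·x³ − sin(θ)·y³). There exists θ̄ ∈ (0,π) such that for all θ ∈ (0,θ̄): (i) the quartic form x⁴ + y⁴ is positive definite with ⟨∇(x⁴+y⁴)(x,y), g_θ(x,y)⟩ < 0 for all (x,y) ≠ (0,0), and (ii) there exists no homogeneous polynomial W ∈ ℝ[x,y] of degree 6 with W(x,y) > 0 for all (x,y) ≠ (0,0) and ⟨∇W(x,y), g_θ(x,y)⟩ < 0 for all (x,y) ≠ (0,0). That is, g_θ admits a homogeneous polynomial Lyapunov function of degree 4 but none of degree 6. -/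

import Mathlib

open MvPolynomial Real

private lemma expand6 (W : MvPolynomial (Fin 2) ℝ) (h : W.IsHomogeneous 6) :
    ∃ c : ℕ → ℝ, W = ∑ k ∈ Finset.range 7, C (c k) * X 0 ^ k * X 1 ^ (6 - k) := by
  refine ⟨fun k => coeff (Finsupp.single 0 k + Finsupp.single 1 (6 - k)) W, ?_⟩
  ext m
  have hm : m = Finsupp.single 0 (m 0) + Finsupp.single 1 (m 1) := by
    ext i; fin_cases i <;> simp
  rw [MvPolynomial.coeff_sum]
  have hco : ∀ k : ℕ, (C (coeff (Finsupp.single 0 k + Finsupp.single 1 (6 - k)) W)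
      * X (0 : Fin 2) ^ k * X 1 ^ (6 - k) : MvPolynomial (Fin 2) ℝ)
      = monomial (Finsupp.single 0 k + Finsupp.single 1 (6 - k))
          (coeff (Finsupp.single 0 k + Finsupp.single 1 (6 - k)) W) := by
    intro k
    rw [C_mul_X_pow_eq_monomial, X_pow_eq_monomial, monomial_mul, mul_one]
  simp only [hco, coeff_monomial]
  by_cases hdeg : m 0 + m 1 = 6
  · rw [Finset.sum_eq_single (m 0)]
    · have h1 : 6 - m 0 = m 1 := by omega
      rw [if_pos]; · rw [h1, ← hm]
      · rw [h1, ← hm]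
    · intro k hk hkm
      rw [if_neg]
      intro hEq
      apply hkm
      have := DFunLike.congr_fun hEq 0
      simpa using this
    · intro h0; exfalso; apply h0; simp; omega
  · have : coeff m W = 0 := by
      apply h.coeff_eq_zero
      have : m.degree = m 0 + m 1 := by
        rw [Finsupp.degree_apply]
        rw [Finset.sum_subset (Finset.subset_univ _)
          (by intro i _ hi; simpa using Finsupp.notMem_support_iff.mp hi)]
        simp [Fin.sum_univ_two]
      omega
    rw [this]
    symm
    apply Finset.sum_eq_zero
    intro k hk
    rw [if_neg]
    intro hEq
    apply hdeg
    have h0 := DFunLike.congr_fun hEq 0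
    have h1 := DFunLike.congr_fun hEq 1
    simp at h0 h1
    simp at hk
    omega

theorem degree_four_lyapunov_but_no_degree_six :
    ∃ θbar ∈ Set.Ioo (0 : ℝ) π, ∀ θ ∈ Set.Ioo (0 : ℝ) θbar,
      ((∀ x y : ℝ, (x, y) ≠ (0, 0) → 0 < x^4 + y^4) ∧
       (∀ x y : ℝ, (x, y) ≠ (0, 0) →
         4*x^3 * (-sin θ * x^3 + cos θ * y^3) +
         4*y^3 * (-cos θ * x^3 - sin θ * y^3) < 0)) ∧
      ¬ ∃ W : MvPolynomial (Fin 2) ℝ, W.IsHomogeneous 6 ∧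
        (∀ x y : ℝ, (x, y) ≠ (0, 0) → 0 < eval ![x, y] W) ∧
        (∀ x y : ℝ, (x, y) ≠ (0, 0) →
          eval ![x, y] (pderiv 0 W) * (-sin θ * x^3 + cos θ * y^3) +
          eval ![x, y] (pderiv 1 W) * (-cos θ * x^3 - sin θ * y^3) < 0) := by
  have hpi := Real.pi_gt_three
  refine ⟨1/1000, ⟨by norm_num, by linarith⟩, ?_⟩
  intro θ hθ
  obtain ⟨hθ0, hθ1⟩ := hθ
  have hs : 0 < sin θ := Real.sin_pos_of_pos_of_lt_pi hθ0 (by linarith)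
  have hs1 : sin θ < 1/1000 := lt_trans (Real.sin_lt hθ0) hθ1
  have hc : 1/2 < cos θ := by
    have h1 := Real.one_sub_sq_div_two_le_cos (x := θ)
    nlinarith
  have hne : ∀ x y : ℝ, (x, y) ≠ ((0 : ℝ), (0 : ℝ)) → x ≠ 0 ∨ y ≠ 0 := by
    intro x y hxy
    by_contra h
    push_neg at h
    exact hxy (by simp [h.1, h.2])
  constructor
  · constructor
    · intro x y hxy
      rcases hne x y hxy with h | h
      · have h1 : 0 < x^4 := by positivity
        have h2 : (0:ℝ) ≤ y^4 := by positivity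
        linarith
      · have h1 : 0 < y^4 := by positivity
        have h2 : (0:ℝ) ≤ x^4 := by positivity
        linarith
    · intro x y hxy
      have h6 : 0 < x^6 + y^6 := by
        rcases hne x y hxy with h | h
        · have h1 : 0 < x^6 := by positivity
          have h2 : (0:ℝ) ≤ y^6 := by positivity
          linarith
        · have h1 : 0 < y^6 := by positivity
          have h2 : (0:ℝ) ≤ x^6 := by positivity
          linarith
      have key : 4*x^3 * (-sin θ * x^3 + cos θ * y^3) +
          4*y^3 * (-cos θ * x^3 - sin θ * y^3) = -(4 * sin θ * (x^6 + y^6)) := by ring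
      rw [key]
      have := mul_pos (by linarith : (0:ℝ) < 4 * sin θ) h6
      linarith
  · rintro ⟨W, hhom, hpos, hder⟩
    obtain ⟨c, hWeq⟩ := expand6 W hhom
    have hW : ∀ x y : ℝ, eval ![x, y] W =
        c 0 * y^6 + c 1 * x * y^5 + c 2 * x^2 * y^4 + c 3 * x^3 * y^3 + c 4 * x^4 * y^2
          + c 5 * x^5 * y + c 6 * x^6 := by
      intro x y; rw [hWeq]; simp [Finset.sum_range_succ]
    have hWx : ∀ x y : ℝ, eval ![x, y] (pderiv 0 W) =
        c 1 * y^5 + 2 * c 2 * x * y^4 + 3 * c 3 * x^2 * y^3 + 4 * c 4 * x^3 * y^2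
          + 5 * c 5 * x^4 * y + 6 * c 6 * x^5 := by
      intro x y; rw [hWeq]
      simp [Finset.sum_range_succ, pderiv_C_mul, pderiv_mul, pderiv_pow, Pi.single_apply]
      ring
    have hWy : ∀ x y : ℝ, eval ![x, y] (pderiv 1 W) =
        6 * c 0 * y^5 + 5 * c 1 * x * y^4 + 4 * c 2 * x^2 * y^3 + 3 * c 3 * x^3 * y^2
          + 2 * c 4 * x^4 * y + c 5 * x^5 := by
      intro x y; rw [hWeq]
      simp [Finset.sum_range_succ, pderiv_C_mul, pderiv_mul, pderiv_pow, Pi.single_apply]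
      ring
    -- positivity at points
    have p1 := hpos 1 0 (by norm_num); rw [hW] at p1; norm_num at p1
    have p2 := hpos 0 1 (by norm_num); rw [hW] at p2; norm_num at p2
    have p3 := hpos 1 1 (by norm_num); rw [hW] at p3; norm_num at p3
    have p4 := hpos 1 (-1) (by norm_num); rw [hW] at p4; norm_num at p4
    have p5 := hpos 2 1 (by norm_num); rw [hW] at p5; norm_num at p5
    have p6 := hpos 1 (-2) (by norm_num); rw [hW] at p6; norm_num at p6
    -- derivative at points
    have d1 := hder 1 1 (by norm_num); rw [hWx, hWy] at d1; norm_num at d1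
    have d2 := hder 1 (-1) (by norm_num); rw [hWx, hWy] at d2; norm_num at d2
    have d3 := hder 2 1 (by norm_num); rw [hWx, hWy] at d3; norm_num at d3
    have d4 := hder 1 (-2) (by norm_num); rw [hWx, hWy] at d4; norm_num at d4
    have d5 := hder 1 3 (by norm_num); rw [hWx, hWy] at d5; norm_num at d5
    have d6 := hder 3 (-1) (by norm_num); rw [hWx, hWy] at d6; norm_num at d6
    -- auxiliary positive combinations
    have hv : 0 < c 0 + c 6 := by linarith
    have hvw : 0 < c 0 + c 2 + c 4 + c 6 := by linarith
    have hpc : 0 < 65*(c 0 + c 6) - 30*(c 1 - c 5) + 20*(c 2 + c 4) := by nlinarith [p5, p6]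
    have m1 := mul_pos hs hv
    have m2 := mul_pos hs hpc
    have m3 := mul_nonneg (by linarith : (0:ℝ) ≤ cos θ - 1/2) hv.le
    have m4 := mul_nonneg (by linarith : (0:ℝ) ≤ cos θ - 1/2) hvw.le
    have m5 := mul_pos (by linarith : (0:ℝ) < 1/1000 - sin θ) hv
    have m6 := mul_pos (by linarith : (0:ℝ) < 1/1000 - sin θ) hvw
    linarith [d1, d2, d3, d4, d5, d6, m1, m2, m3, m4, m5, m6]
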